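/- The measure μ_0 on c_0 given as the law of a sequence of independent normal random variables Y_n with mean 0 and variance (log n)^{-2} is fully supported on c_0: for every x ∈ c_0 and r > 0, μ_0(B(x,r)) > 0, where B(x,r) is the open sup-norm ball. -/

import Mathlib

open Filter Topology MeasureTheory ProbabilityTheory


lemma aux_prod_one_sub (s : Finset ℕ) (f : ℕ → ENNReal) :
    1 - ∑ i ∈ s, f i ≤ ∏ i ∈ s, (1 - f i) := by
  classical
  induction s using Finset.induction_on with
  | empty => simp
  | @insert a s ha ih =>
    rw [Finset.sum_insert ha, Finset.prod_insert ha]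
    calc 1 - (f a + ∑ i ∈ s, f i) = 1 - (∑ i ∈ s, f i + f a) := by rw [add_comm]
    _ = (1 - ∑ i ∈ s, f i) - f a := by rw [tsub_tsub]
    _ ≤ (1 - ∑ i ∈ s, f i) - f a * (1 - ∑ i ∈ s, f i) := by
        exact tsub_le_tsub_left (mul_le_of_le_one_right' tsub_le_self) _
    _ = (1 - f a) * (1 - ∑ i ∈ s, f i) := by
        rw [ENNReal.sub_mul, one_mul]
        intro _ _
        exact (tsub_le_self.trans_lt ENNReal.one_lt_top).ne
    _ ≤ (1 - f a) * ∏ i ∈ s, (1 - f i) := mul_le_mul_right ih _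

lemma aux_gauss_ball_pos {v : NNReal} (hv : v ≠ 0) (c ρ : ℝ) (hρ : 0 < ρ) :
    0 < gaussianReal 0 v (Metric.closedBall c ρ) := by
  rw [pos_iff_ne_zero]
  intro h
  have := gaussianReal_absolutelyContinuous' 0 hv h
  rw [Real.volume_closedBall] at this
  simp only [ENNReal.ofReal_eq_zero] at this
  linarith

lemma aux_pdf_shift {v : NNReal} (hv : v ≠ 0) {t y m : ℝ}
    (h : (y - m) ^ 2 + t ^ 2 ≤ y ^ 2) :
    gaussianPDF 0 v y ≤ ENNReal.ofReal (Real.exp (-t ^ 2 / (2 * v))) * gaussianPDF m v y := by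
  rw [gaussianPDF, gaussianPDF, ← ENNReal.ofReal_mul (Real.exp_nonneg _)]
  apply ENNReal.ofReal_le_ofReal
  rw [gaussianPDFReal, gaussianPDFReal, mul_left_comm, ← Real.exp_add]
  apply mul_le_mul_of_nonneg_left _ (by positivity)
  apply Real.exp_le_exp.mpr
  have hv0 : (0:ℝ) < (v:ℝ) := by positivity
  rw [sub_zero, div_add_div _ _ (by positivity) (by positivity),
    div_le_div_iff₀ (by positivity) (by positivity)]
  nlinarith [sq_nonneg y]

lemma aux_gauss_tail {v : NNReal} (hv : v ≠ 0) {t : ℝ} (ht : 0 ≤ t) :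
    gaussianReal 0 v {y | t < |y|} ≤ ENNReal.ofReal (2 * Real.exp (-t ^ 2 / (2 * v))) := by
  have hsub : {y : ℝ | t < |y|} ⊆ Set.Iio (-t) ∪ Set.Ioi t := by
    intro y hy
    simp only [Set.mem_setOf_eq] at hy
    rcases lt_abs.mp hy with h | h
    · exact Or.inr h
    · exact Or.inl (by simpa [Set.mem_Iio] using lt_neg.mp h)
  have h1 : gaussianReal 0 v {y | t < |y|} ≤
      gaussianReal 0 v (Set.Iio (-t)) + gaussianReal 0 v (Set.Ioi t) :=
    (measure_mono hsub).trans (measure_union_le _ _)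
  have hIoi : gaussianReal 0 v (Set.Ioi t) ≤ ENNReal.ofReal (Real.exp (-t ^ 2 / (2 * v))) := by
    rw [gaussianReal_apply _ hv]
    calc ∫⁻ y in Set.Ioi t, gaussianPDF 0 v y
        ≤ ∫⁻ y in Set.Ioi t, ENNReal.ofReal (Real.exp (-t ^ 2 / (2 * v))) * gaussianPDF t v y := by
          refine setLIntegral_mono ((measurable_gaussianPDF _ _).const_mul _) ?_
          intro y hy
          exact aux_pdf_shift hv (by nlinarith [Set.mem_Ioi.mp hy])
    _ = ENNReal.ofReal (Real.exp (-t ^ 2 / (2 * v))) * ∫⁻ y in Set.Ioi t, gaussianPDF t v y := by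
          rw [lintegral_const_mul _ (measurable_gaussianPDF _ _)]
    _ ≤ ENNReal.ofReal (Real.exp (-t ^ 2 / (2 * v))) * ∫⁻ y, gaussianPDF t v y :=
          mul_le_mul_right (setLIntegral_le_lintegral _ _) _
    _ = ENNReal.ofReal (Real.exp (-t ^ 2 / (2 * v))) := by
          rw [lintegral_gaussianPDF_eq_one t hv, mul_one]
  have hIio : gaussianReal 0 v (Set.Iio (-t)) ≤ ENNReal.ofReal (Real.exp (-t ^ 2 / (2 * v))) := by
    rw [gaussianReal_apply _ hv]
    calc ∫⁻ y in Set.Iio (-t), gaussianPDF 0 v y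
        ≤ ∫⁻ y in Set.Iio (-t), ENNReal.ofReal (Real.exp (-t ^ 2 / (2 * v))) * gaussianPDF (-t) v y := by
          refine setLIntegral_mono ((measurable_gaussianPDF _ _).const_mul _) ?_
          intro y hy
          exact aux_pdf_shift hv (by nlinarith [Set.mem_Iio.mp hy])
    _ = ENNReal.ofReal (Real.exp (-t ^ 2 / (2 * v))) * ∫⁻ y in Set.Iio (-t), gaussianPDF (-t) v y := by
          rw [lintegral_const_mul _ (measurable_gaussianPDF _ _)]
    _ ≤ ENNReal.ofReal (Real.exp (-t ^ 2 / (2 * v))) * ∫⁻ y, gaussianPDF (-t) v y :=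
          mul_le_mul_right (setLIntegral_le_lintegral _ _) _
    _ = ENNReal.ofReal (Real.exp (-t ^ 2 / (2 * v))) := by
          rw [lintegral_gaussianPDF_eq_one (-t) hv, mul_one]
  calc gaussianReal 0 v {y | t < |y|} ≤ _ + _ := h1
  _ ≤ ENNReal.ofReal (Real.exp (-t ^ 2 / (2 * v))) + ENNReal.ofReal (Real.exp (-t ^ 2 / (2 * v))) :=
      add_le_add hIio hIoi
  _ = ENNReal.ofReal (2 * Real.exp (-t ^ 2 / (2 * v))) := by
      rw [← ENNReal.ofReal_add (Real.exp_nonneg _) (Real.exp_nonneg _)]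
      congr 1
      ring

-- summability of the tail bound
lemma aux_summable {t : ℝ} (ht : 0 < t) :
    Summable (fun n : ℕ => 2 * Real.exp (-t ^ 2 * (Real.log n) ^ 2 / 2)) := by
  set g : ℕ → ℝ := fun n => 2 * Real.exp (-t ^ 2 * (Real.log n) ^ 2 / 2) with hg
  have hc : (0:ℝ) < t ^ 2 / 2 := by positivity
  have hlog : Tendsto (fun n : ℕ => Real.log n) atTop atTop :=
    Real.tendsto_log_atTop.comp tendsto_natCast_atTop_atTop
  obtain ⟨M, hM⟩ := (hlog.eventually_ge_atTop (max 1 ((2 + Real.log 2) / (t ^ 2 / 2)))).exists_forall_of_atTop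
  have key : ∀ n : ℕ, M ≤ n → g n ≤ (n : ℝ) ^ (-2 : ℝ) := by
    intro n hn
    have hL := hM n hn
    have hL1 : (1:ℝ) ≤ Real.log n := le_trans (le_max_left _ _) hL
    have hL2 : (2 + Real.log 2) / (t ^ 2 / 2) ≤ Real.log n := le_trans (le_max_right _ _) hL
    have hn0 : (0:ℝ) < n := by
      rcases Nat.eq_zero_or_pos n with h | h
      · subst h; norm_num at hL1
      · exact_mod_cast h
    rw [Real.rpow_def_of_pos hn0]
    have h2 : 2 + Real.log 2 ≤ (t ^ 2 / 2) * Real.log n := by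
      have := (div_le_iff₀ hc).mp hL2
      linarith
    have hlog2 : (0:ℝ) < Real.log 2 := Real.log_pos one_lt_two
    have : g n = Real.exp (Real.log 2 + -t ^ 2 * (Real.log n) ^ 2 / 2) := by
      rw [Real.exp_add, Real.exp_log two_pos]
    rw [this]
    apply Real.exp_le_exp.mpr
    nlinarith [sq_nonneg (Real.log n - 1)]
  have hs : Summable (fun k : ℕ => ((k + M : ℕ) : ℝ) ^ (-2 : ℝ)) :=
    (summable_nat_add_iff M).mpr (Real.summable_nat_rpow.mpr (by norm_num))
  refine (summable_nat_add_iff M).mp (Summable.of_nonneg_of_le (fun k => by positivity) ?_ hs)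
  intro k
  exact key _ (Nat.le_add_left M k)

/-- the law of the sequence of independent centred normal random variables
`Y n` with variance `(log n)⁻²` (for `n ≥ 2`; nondegenerate normal in the remaining
coordinates) is fully supported on `c₀`: every open sup-norm ball around a point of `c₀`
has positive probability. -/
theorem gaussian_seq_fully_supported_on_c0
    {Ω : Type} [MeasurableSpace Ω] (P : Measure Ω) [IsProbabilityMeasure P]
    (Y : ℕ → Ω → ℝ) (hmeas : ∀ n, Measurable (Y n))
    (hindep : iIndepFun Y P)
    (hlaw : ∀ n, 2 ≤ n →
      Measure.map (Y n) P = gaussianReal 0 (Real.toNNReal (((Real.log n) ^ 2)⁻¹)))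
    (hlaw' : ∀ n < 2, ∃ v : NNReal, v ≠ 0 ∧ Measure.map (Y n) P = gaussianReal 0 v)
    (x : ℕ → ℝ) (hx : Tendsto x atTop (nhds 0)) (r : ℝ) (hr : 0 < r) :
    0 < P {ω | ∃ s : ℝ, s < r ∧ ∀ n, |Y n ω - x n| ≤ s} := by
  classical
  set t : ℝ := r / 4 with ht_def
  have ht : 0 < t := by positivity
  -- choose N beyond which |x n| < t
  obtain ⟨N, hN⟩ : ∃ N, ∀ n ≥ N, |x n| < t := by
    have := (Metric.tendsto_atTop.mp hx) t ht
    obtain ⟨N, hN⟩ := this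
    exact ⟨N, fun n hn => by simpa [Real.dist_eq] using hN n hn⟩
  set c : ℕ → ℝ := fun n => if n < N then x n else 0 with hc_def
  set ρ : ℕ → ℝ := fun n => if n < N then r / 2 else t with hρ_def
  have hρpos : ∀ n, 0 < ρ n := by
    intro n; simp only [hρ_def]; split <;> [linarith; exact ht]
  set S : ℕ → Set ℝ := fun n => Metric.closedBall (c n) (ρ n) with hS_def
  set A : ℕ → Set Ω := fun n => Y n ⁻¹' S n with hA_def
  have hAm : ∀ n, MeasurableSet (A n) := fun n => (hmeas n) measurableSet_closedBall
  set E : Set Ω := ⋂ n, A n with hE_def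
  -- E is contained in the target event
  have hE_sub : E ⊆ {ω | ∃ s : ℝ, s < r ∧ ∀ n, |Y n ω - x n| ≤ s} := by
    intro ω hω
    refine ⟨r / 2, by linarith, fun n => ?_⟩
    have hωn : Y n ω ∈ S n := Set.mem_iInter.mp hω n
    rw [hS_def, Metric.mem_closedBall, Real.dist_eq] at hωn
    simp only [hc_def, hρ_def] at hωn
    by_cases hn : n < N
    · rw [if_pos hn, if_pos hn] at hωn
      exact hωn
    · rw [if_neg hn, if_neg hn] at hωn
      have hxn : |x n| < t := hN n (not_lt.mp hn)
      have : |Y n ω - x n| ≤ |Y n ω - 0| + |x n| := by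
        calc |Y n ω - x n| = |(Y n ω - 0) + (- x n)| := by ring_nf
        _ ≤ |Y n ω - 0| + |(- x n)| := abs_add_le _ _
        _ = |Y n ω - 0| + |x n| := by rw [abs_neg]
      have : |Y n ω - x n| ≤ t + t := by
        linarith
      linarith [this]
  -- positivity of each P (A n)
  have hmap : ∀ n, P (A n) = Measure.map (Y n) P (S n) :=
    fun n => (Measure.map_apply (hmeas n) measurableSet_closedBall).symm
  have hvar : ∀ n : ℕ, 2 ≤ n → (Real.toNNReal (((Real.log n) ^ 2)⁻¹)) ≠ 0 := by
    intro n hn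
    have hlogn : 0 < Real.log n := Real.log_pos (by exact_mod_cast hn.trans_lt' one_lt_two)
    exact (Real.toNNReal_pos.mpr (by positivity)).ne'
  have hApos : ∀ n, 0 < P (A n) := by
    intro n
    rw [hmap n]
    rcases lt_or_ge n 2 with h2 | h2
    · obtain ⟨v, hv, hl⟩ := hlaw' n h2
      rw [hl]; exact aux_gauss_ball_pos hv _ _ (hρpos n)
    · rw [hlaw n h2]; exact aux_gauss_ball_pos (hvar n h2) _ _ (hρpos n)
  -- tail bound
  set q : ℕ → ENNReal := fun n => P (A n)ᶜ with hq_def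
  set g : ℕ → ℝ := fun n => 2 * Real.exp (-t ^ 2 * (Real.log n) ^ 2 / 2) with hg_def
  set M : ℕ := max N 2 with hM_def
  have hq_le : ∀ n, M ≤ n → q n ≤ ENNReal.ofReal (g n) := by
    intro n hn
    have hnN : N ≤ n := le_trans (le_max_left _ _) hn
    have hn2 : 2 ≤ n := le_trans (le_max_right _ _) hn
    have hnlt : ¬ n < N := not_lt.mpr hnN
    have hScompl : (S n)ᶜ = {y : ℝ | t < |y|} := by
      ext y
      simp only [hS_def, Set.mem_compl_iff, Metric.mem_closedBall, Real.dist_eq, not_le,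
        Set.mem_setOf_eq, hc_def, hρ_def]
      rw [if_neg hnlt, if_neg hnlt, sub_zero]
    have hmsc : MeasurableSet ((S n)ᶜ) := measurableSet_closedBall.compl
    have : q n = Measure.map (Y n) P {y : ℝ | t < |y|} := by
      have h1 : q n = P (Y n ⁻¹' (S n)ᶜ) := by rw [Set.preimage_compl]
      rw [h1, ← Measure.map_apply (hmeas n) hmsc, hScompl]
    rw [this, hlaw n hn2]
    refine (aux_gauss_tail (hvar n hn2) ht.le).trans ?_
    apply ENNReal.ofReal_le_ofReal
    have hlogn : 0 < Real.log n := Real.log_pos (by exact_mod_cast hn2.trans_lt' one_lt_two)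
    have hcoe : ((Real.toNNReal (((Real.log n) ^ 2)⁻¹)) : ℝ) = ((Real.log n) ^ 2)⁻¹ :=
      Real.coe_toNNReal _ (by positivity)
    rw [hcoe]
    have : -t ^ 2 / (2 * ((Real.log n) ^ 2)⁻¹) = -t ^ 2 * (Real.log n) ^ 2 / 2 := by
      field_simp
    rw [this]
  have hgsum : Summable g := aux_summable ht
  -- tails of q
  have hq_tail_le : ∀ K, M ≤ K → (∑' k, q (k + K)) ≤ ENNReal.ofReal (∑' k, g (k + K)) := by
    intro K hK
    rw [ENNReal.ofReal_tsum_of_nonneg (fun k => by positivity) ((summable_nat_add_iff K).mpr hgsum)]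
    exact ENNReal.tsum_le_tsum (fun k => hq_le _ (hK.trans (Nat.le_add_left K k)))
  have hq_tail_ne : (∑' k, q (k + M)) ≠ ⊤ :=
    ((hq_tail_le M le_rfl).trans_lt ENNReal.ofReal_lt_top).ne
  have hpick : ∀ ε : ENNReal, 0 < ε → ∀ L : ℕ, ∃ K, L ≤ K ∧ M ≤ K ∧ (∑' k, q (k + K)) < ε := by
    intro ε hε L
    have htt := ENNReal.tendsto_sum_nat_add (fun k => q (k + M)) hq_tail_ne
    have := (htt.eventually (gt_mem_nhds hε)).exists_forall_of_atTop
    obtain ⟨i₀, hi₀⟩ := this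
    refine ⟨max i₀ L + M, le_trans (le_max_right i₀ L) (Nat.le_add_right _ _),
      Nat.le_add_left M _, ?_⟩
    have hh := hi₀ (max i₀ L) (le_max_left _ _)
    have heq : (fun k => q (k + (max i₀ L + M))) = fun k => q (k + max i₀ L + M) := by
      funext k; rw [add_assoc]
    rw [heq]
    exact hh
  -- choose K₀ with tail ≤ 1/2
  obtain ⟨K₀, hK₀L, hK₀M, hK₀tail⟩ := hpick (1/2) (by norm_num) 0
  set C : ENNReal := ∏ n ∈ Finset.range K₀, P (A n) with hC_def
  have hCpos : 0 < C := CanonicallyOrderedAdd.prod_pos.mpr (fun i _ => hApos i)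
  have hCle1 : C ≤ 1 := Finset.prod_le_one (fun _ _ => zero_le) (fun i _ => prob_le_one)
  have hCne : C ≠ ⊤ := (hCle1.trans_lt ENNReal.one_lt_top).ne
  have hCtpos : 0 < C.toReal := ENNReal.toReal_pos hCpos.ne' hCne
  -- choose K with tail < C/4
  obtain ⟨K, hKK₀, hKM, hKtail⟩ := hpick (ENNReal.ofReal (C.toReal / 4))
    (ENNReal.ofReal_pos.mpr (by linarith)) K₀
  -- the finite intersection
  have hfac : ∀ n, P (A n) = 1 - q n := by
    intro n
    have h1 : q n = 1 - P (A n) := prob_compl_eq_one_sub (hAm n)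
    rw [h1, ENNReal.sub_sub_cancel ENNReal.one_ne_top prob_le_one]
  have hBprod : P (⋂ n ∈ Finset.range K, A n) = ∏ n ∈ Finset.range K, P (A n) :=
    hindep.measure_inter_preimage_eq_mul (Finset.range K) (fun i _ => measurableSet_closedBall)
  -- product lower bound
  have hIco : ∑ n ∈ Finset.Ico K₀ K, q n ≤ ∑' k, q (k + K₀) := by
    rw [Finset.sum_Ico_eq_sum_range]
    calc ∑ i ∈ Finset.range (K - K₀), q (K₀ + i)
        = ∑ i ∈ Finset.range (K - K₀), q (i + K₀) := by
          refine Finset.sum_congr rfl fun i _ => by rw [add_comm]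
    _ ≤ ∑' k, q (k + K₀) := ENNReal.sum_le_tsum _
  have hhalf : (1:ENNReal) - ∑ n ∈ Finset.Ico K₀ K, q n ≥ 1/2 := by
    have h2 : ∑ n ∈ Finset.Ico K₀ K, q n ≤ 1/2 := hIco.trans hK₀tail.le
    calc (1:ENNReal) - ∑ n ∈ Finset.Ico K₀ K, q n ≥ 1 - 1/2 := tsub_le_tsub_left h2 1
    _ = 1/2 := by norm_num [ENNReal.sub_half]
  have hprod_lb : C * (1/2) ≤ ∏ n ∈ Finset.range K, P (A n) := by
    rw [← Finset.prod_range_mul_prod_Ico (fun n => P (A n)) hKK₀]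
    refine mul_le_mul_right ?_ C
    calc (1:ENNReal)/2 ≤ 1 - ∑ n ∈ Finset.Ico K₀ K, q n := hhalf
    _ ≤ ∏ n ∈ Finset.Ico K₀ K, (1 - q n) := aux_prod_one_sub _ _
    _ = ∏ n ∈ Finset.Ico K₀ K, P (A n) := by
        exact Finset.prod_congr rfl fun n _ => (hfac n).symm
  -- splitting
  have hsplit : (⋂ n ∈ Finset.range K, A n) ⊆ E ∪ ⋃ k, (A (k + K))ᶜ := by
    intro ω hω
    by_cases hE : ω ∈ E
    · exact Or.inl hE
    · right
      rw [hE_def, Set.mem_iInter] at hE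
      push_neg at hE
      obtain ⟨n, hn⟩ := hE
      have hnK : K ≤ n := by
        by_contra hcon
        exact hn (Set.mem_iInter₂.mp hω n (Finset.mem_range.mpr (not_le.mp hcon)))
      exact Set.mem_iUnion.mpr ⟨n - K, by rwa [Nat.sub_add_cancel hnK]⟩
  -- conclusion
  refine lt_of_lt_of_le ?_ (measure_mono hE_sub)
  by_contra h0
  push_neg at h0
  have hE0 : P E = 0 := le_antisymm h0 zero_le
  have hchain : C * (1/2) ≤ ENNReal.ofReal (C.toReal / 4) := by
    calc C * (1/2) ≤ P (⋂ n ∈ Finset.range K, A n) := by rw [hBprod]; exact hprod_lb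
    _ ≤ P E + P (⋃ k, (A (k + K))ᶜ) := (measure_mono hsplit).trans (measure_union_le _ _)
    _ ≤ P E + ∑' k, q (k + K) := add_le_add_right (measure_iUnion_le _) _
    _ ≤ 0 + ENNReal.ofReal (C.toReal / 4) := add_le_add hE0.le hKtail.le
    _ = ENNReal.ofReal (C.toReal / 4) := by rw [zero_add]
  have hlt : ENNReal.ofReal (C.toReal / 4) < C * (1/2) := by
    have h12 : ENNReal.ofReal (1/2 : ℝ) = 1/2 := by
      rw [ENNReal.ofReal_div_of_pos (by norm_num), ENNReal.ofReal_one, ENNReal.ofReal_ofNat]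
    have : C * (1/2) = ENNReal.ofReal (C.toReal * (1/2)) := by
      rw [ENNReal.ofReal_mul ENNReal.toReal_nonneg, ENNReal.ofReal_toReal hCne, h12]
    rw [this]
    exact ENNReal.ofReal_lt_ofReal_iff (by linarith) |>.mpr (by linarith)
  exact absurd hchain (not_le.mpr hlt)
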